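/- Assume f_b has two distinct roots x_{b1} < x_{b2}. Then there exists ã* ∈ (x_{b1}, x_{b2}) satisfying F(ã*)·e^{ã*} = F'(ã*)·(e^{ã*} + c_b) if and only if |∫_{−∞}^{x_{b1}} Ψ(x)·e^x·f_b(x) dx| < ∫_{x_{b1}}^{x_{b2}} Ψ(x)·e^x·f_b(x) dx. -/

import Mathlib

open Real MeasureTheory Set Filter Topology

namespace Stmt16Aux


noncomputable def A (k q c : ℝ) : ℝ := ∫ u in Ioi (0:ℝ), u ^ q * Real.exp (k * c * u - u ^ 2 / 2)

lemma exponent_le (a u : ℝ) : a * u - u ^ 2 / 2 ≤ a ^ 2 - u ^ 2 / 4 := by nlinarith [sq_nonneg (a - u/2)]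

lemma measA (k q c : ℝ) : AEStronglyMeasurable (fun u : ℝ => u ^ q * Real.exp (k * c * u - u ^ 2 / 2))
    (volume.restrict (Ioi 0)) := by
  apply Measurable.aestronglyMeasurable
  exact (measurable_id.pow_const q).mul (((measurable_const.mul measurable_id).sub
    ((measurable_id.pow_const 2).div_const 2)).exp)

lemma integrableA {q : ℝ} (hq : -1 < q) (k c : ℝ) :
    IntegrableOn (fun u : ℝ => u ^ q * Real.exp (k * c * u - u ^ 2 / 2)) (Ioi 0) := by
  have hbd : IntegrableOn (fun u : ℝ => Real.exp ((k*c) ^ 2) * (u ^ q * Real.exp (-(4:ℝ)⁻¹ * u ^ 2))) (Ioi 0) :=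
    (integrableOn_rpow_mul_exp_neg_mul_sq (by norm_num) hq).const_mul _
  refine hbd.mono' (measA k q c) ?_
  rw [ae_restrict_iff' measurableSet_Ioi]
  filter_upwards with u hu
  have h1 : (0:ℝ) ≤ u ^ q := le_of_lt (rpow_pos_of_pos hu q)
  rw [Real.norm_eq_abs, abs_of_nonneg (mul_nonneg h1 (exp_pos _).le)]
  have := exponent_le (k*c) u
  calc u ^ q * Real.exp (k*c*u - u^2/2) ≤ u ^ q * Real.exp ((k*c)^2 - u^2/4) := by
        exact mul_le_mul_of_nonneg_left (exp_le_exp.2 this) h1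
    _ = Real.exp ((k*c)^2) * (u ^ q * Real.exp (-(4:ℝ)⁻¹ * u^2)) := by
        rw [show (k*c)^2 - u^2/4 = (k*c)^2 + (-(4:ℝ)⁻¹*u^2) by ring, Real.exp_add]; ring




lemma A_pos {q : ℝ} (hq : -1 < q) (k c : ℝ) : 0 < A k q c := by
  rw [A]
  refine (setIntegral_pos_iff_support_of_nonneg_ae ?_ (integrableA hq k c)).2 ?_
  · rw [EventuallyLE, ae_restrict_iff' measurableSet_Ioi]
    filter_upwards with u hu
    exact le_of_lt (mul_pos (rpow_pos_of_pos hu q) (exp_pos _))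
  · have hsub : Ioi (0:ℝ) ⊆ Function.support fun u => u ^ q * Real.exp (k * c * u - u ^ 2 / 2) := by
      intro u hu
      exact (mul_pos (rpow_pos_of_pos hu q) (exp_pos _)).ne'
    rw [inter_eq_right.mpr hsub, Real.volume_Ioi]
    exact ENNReal.zero_lt_top

lemma A_hasDerivAt {q : ℝ} (hq : -1 < q) {k : ℝ} (hk : 0 ≤ k) (c : ℝ) :
    HasDerivAt (fun x => A k q x) (k * A k (q+1) c) c := by
  have key := hasDerivAt_integral_of_dominated_loc_of_deriv_le (μ := volume.restrict (Ioi 0))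
      (F := fun x u => u ^ q * Real.exp (k * x * u - u ^ 2 / 2))
      (F' := fun x u => k * (u ^ (q+1) * Real.exp (k * x * u - u ^ 2 / 2)))
      (bound := fun u => k * (u ^ (q+1) * Real.exp (k * (c+1) * u - u ^ 2 / 2)))
      (x₀ := c) (s := Metric.ball c 1) (Metric.ball_mem_nhds c one_pos)
      (Eventually.of_forall fun x => measA k q x)
      (integrableA hq k c)
      ((measA k (q+1) c).const_mul k)
      ?_ ((integrableA (by linarith) k (c+1)).const_mul k) ?_
  · have h2 : (∫ u in Ioi (0:ℝ), k * (u ^ (q+1) * Real.exp (k * c * u - u ^ 2 / 2))) = k * A k (q+1) c := by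
      rw [A, integral_const_mul]
    rw [← h2]
    exact key.2
  · rw [ae_restrict_iff' measurableSet_Ioi]
    filter_upwards with u hu x hx
    have hu' : (0:ℝ) < u := hu
    rw [Real.norm_eq_abs, abs_of_nonneg (mul_nonneg hk (mul_nonneg (rpow_pos_of_pos hu' _).le (exp_pos _).le))]
    have hxle : x ≤ c + 1 := by
      rw [Metric.mem_ball, Real.dist_eq] at hx
      linarith [(abs_lt.1 hx).2]
    have hexp : Real.exp (k * x * u - u ^ 2 / 2) ≤ Real.exp (k * (c+1) * u - u ^ 2 / 2) := by
      apply Real.exp_le_exp.2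
      nlinarith [mul_le_mul_of_nonneg_left hxle hk]
    have := mul_le_mul_of_nonneg_left hexp (rpow_pos_of_pos hu' (q+1)).le
    nlinarith [this, hk]
  · rw [ae_restrict_iff' measurableSet_Ioi]
    filter_upwards with u hu x _
    have hu' : (0:ℝ) < u := hu
    have h1 : HasDerivAt (fun x : ℝ => k * x * u - u ^ 2 / 2) (k * u) x := by
      simpa using ((hasDerivAt_id x).const_mul k |>.mul_const u).sub_const (u ^ 2 / 2)
    have h2 := (h1.exp).const_mul (u ^ q)
    refine h2.congr_deriv ?_
    rw [rpow_add_one hu'.ne']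
    ring

lemma A_tendsto_atBot {q : ℝ} (hq : -1 < q) {k : ℝ} (hk : 0 < k) :
    Tendsto (fun c => A k q c) atBot (𝓝 0) := by
  have h0 : (0:ℝ) = ∫ u in Ioi (0:ℝ), (0:ℝ) := by simp
  rw [h0]
  apply tendsto_integral_filter_of_dominated_convergence
      (fun u => u ^ q * Real.exp (k * 0 * u - u ^ 2 / 2))
  · exact Eventually.of_forall fun x => measA k q x
  · filter_upwards [eventually_le_atBot (0:ℝ)] with c hc
    rw [ae_restrict_iff' measurableSet_Ioi]
    filter_upwards with u hu
    have hu' : (0:ℝ) < u := hu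
    rw [Real.norm_eq_abs, abs_of_nonneg (mul_nonneg (rpow_pos_of_pos hu' _).le (exp_pos _).le)]
    have hexp : Real.exp (k * c * u - u ^ 2 / 2) ≤ Real.exp (k * 0 * u - u ^ 2 / 2) := by
      apply Real.exp_le_exp.2
      nlinarith [mul_le_mul_of_nonneg_right (mul_le_mul_of_nonneg_left hc hk.le) hu'.le]
    exact mul_le_mul_of_nonneg_left hexp (rpow_pos_of_pos hu' q).le
  · exact integrableA hq k 0
  · rw [ae_restrict_iff' measurableSet_Ioi]
    filter_upwards with u hu
    have hu' : (0:ℝ) < u := hu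
    have : Tendsto (fun c : ℝ => k * c * u - u ^ 2 / 2) atBot atBot := by
      apply Tendsto.atBot_add _ tendsto_const_nhds
      exact Tendsto.atBot_mul_const hu' (tendsto_id.const_mul_atBot hk)
    simpa using (Real.tendsto_exp_atBot.comp this).const_mul (u ^ q)


/-- Integration by parts identity: A k (q+2) c = (q+1) A k q c + k c A k (q+1) c. -/
lemma A_ode {q : ℝ} (hq : -1 < q) (k c : ℝ) :
    A k (q+2) c = (q+1) * A k q c + (k*c) * A k (q+1) c := by
  set E : ℝ → ℝ := fun u => Real.exp (k * c * u - u ^ 2 / 2) with hE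
  set f : ℝ → ℝ := fun u => u ^ (q+1) * E u with hf
  set f' : ℝ → ℝ := fun u => (q+1) * (u ^ q * E u) + (k*c) * (u ^ (q+1) * E u) - u ^ (q+2) * E u with hf'
  have hderiv : ∀ u ∈ Ioi (0:ℝ), HasDerivAt f (f' u) u := by
    intro u hu
    have hu' : (0:ℝ) < u := hu
    have h1 : HasDerivAt (fun u : ℝ => u ^ (q+1)) ((q+1) * u ^ q) u := by
      simpa using Real.hasDerivAt_rpow_const (p := q+1) (Or.inl hu'.ne')
    have h2 : HasDerivAt E ((k*c - u) * E u) u := by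
      have : HasDerivAt (fun u : ℝ => k * c * u - u ^ 2 / 2) (k*c - u) u := by
        have := ((hasDerivAt_id u).const_mul (k*c)).sub
          (((hasDerivAt_pow 2 u)).div_const 2)
        simpa [Pi.sub_def] using this
      simpa [hE, mul_comm] using this.exp
    have := h1.mul h2
    refine this.congr_deriv ?_
    have : u ^ (q+2) = u ^ (q+1) * u := by
      rw [show q+2 = (q+1)+1 by ring, rpow_add_one hu'.ne']
    rw [hf']; simp only []
    rw [this]; ring
  have h1 : IntegrableOn (fun u:ℝ => (q+1) * (u ^ q * Real.exp (k*c*u - u^2/2))) (Ioi 0) :=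
    (integrableA hq k c).const_mul _
  have h2 : IntegrableOn (fun u:ℝ => (k*c) * (u ^ (q+1) * Real.exp (k*c*u - u^2/2))) (Ioi 0) :=
    (integrableA (by linarith) k c).const_mul _
  have h3 : IntegrableOn (fun u:ℝ => u ^ (q+2) * Real.exp (k*c*u - u^2/2)) (Ioi 0) :=
    integrableA (by linarith) k c
  have h12 : IntegrableOn (fun u:ℝ => (q+1) * (u ^ q * Real.exp (k*c*u - u^2/2))
      + (k*c) * (u ^ (q+1) * Real.exp (k*c*u - u^2/2))) (Ioi 0) := h1.add h2
  have hint : IntegrableOn f' (Ioi 0) := h12.sub h3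
  have hcont : ContinuousWithinAt f (Ici 0) 0 := by
    have hc1 : ContinuousWithinAt (fun u : ℝ => u ^ (q+1)) (Ici 0) 0 :=
      (Real.continuousAt_rpow_const 0 (q+1) (Or.inr (by linarith))).continuousWithinAt
    exact hc1.mul ((Real.continuous_exp.comp (by continuity)).continuousWithinAt)
  have htop : Tendsto f atTop (𝓝 0) := by
    have hbd : ∀ᶠ u in atTop, ‖f u‖ ≤ Real.exp ((k*c)^2) * (u ^ (q+1) * Real.exp (-(4:ℝ)⁻¹ * u)) := by
      filter_upwards [eventually_ge_atTop (1:ℝ)] with u hu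
      have hu' : (0:ℝ) < u := by linarith
      rw [Real.norm_eq_abs, hf, abs_of_nonneg (mul_nonneg (rpow_pos_of_pos hu' _).le (exp_pos _).le)]
      have h1 : k*c*u - u^2/2 ≤ (k*c)^2 - u^2/4 := exponent_le (k*c) u
      have h2 : (k*c)^2 - u^2/4 ≤ (k*c)^2 + (-(4:ℝ)⁻¹*u) := by nlinarith
      calc u ^ (q+1) * E u ≤ u ^ (q+1) * Real.exp ((k*c)^2 + (-(4:ℝ)⁻¹*u)) := by
            exact mul_le_mul_of_nonneg_left (Real.exp_le_exp.2 (h1.trans h2)) (rpow_pos_of_pos hu' _).le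
        _ = Real.exp ((k*c)^2) * (u ^ (q+1) * Real.exp (-(4:ℝ)⁻¹*u)) := by
            rw [Real.exp_add]; ring
    have hlim : Tendsto (fun u : ℝ => Real.exp ((k*c)^2) * (u ^ (q+1) * Real.exp (-(4:ℝ)⁻¹ * u)))
        atTop (𝓝 0) := by
      have := tendsto_rpow_mul_exp_neg_mul_atTop_nhds_zero (q+1) (4:ℝ)⁻¹ (by norm_num)
      simpa using this.const_mul (Real.exp ((k*c)^2))
    have hnn : ∀ᶠ u in atTop, 0 ≤ f u := by
      filter_upwards [eventually_gt_atTop (0:ℝ)] with u hu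
      exact mul_nonneg (rpow_pos_of_pos hu _).le (exp_pos _).le
    apply squeeze_zero' hnn (by filter_upwards [hbd] with u h using (le_abs_self _).trans (by rwa [← Real.norm_eq_abs])) hlim
  have key := integral_Ioi_of_hasDerivAt_of_tendsto hcont hderiv hint htop
  have hf0 : f 0 = 0 := by
    simp [hf, Real.zero_rpow (by linarith : q+1 ≠ 0)]
  rw [hf0, sub_zero] at key
  -- key : ∫ u in Ioi 0, f' u = 0
  have hsplit : (∫ u in Ioi (0:ℝ), f' u) =
      (q+1) * A k q c + (k*c) * A k (q+1) c - A k (q+2) c := by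
    simp only [hf', hE, A]
    rw [integral_sub h12 h3, integral_add h1 h2, integral_const_mul, integral_const_mul]
  rw [hsplit] at key
  linarith
end Stmt16Aux


set_option maxHeartbeats 1000000 in
theorem stmt16
    (μ σ θ r c_s c_b : ℝ)
    (hμ : 0 < μ) (hσ : 0 < σ) (hr : 0 < r) (hcs : 0 < c_s) (hcb : 0 < c_b)
    (F G : ℝ → ℝ)
    (hF : ∀ x : ℝ, F x = ∫ u in Ioi (0:ℝ),
        u ^ (r / μ - 1) * Real.exp (Real.sqrt (2 * μ / σ ^ 2) * (x - θ) * u - u ^ 2 / 2))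
    (hG : ∀ x : ℝ, G x = ∫ u in Ioi (0:ℝ),
        u ^ (r / μ - 1) * Real.exp (Real.sqrt (2 * μ / σ ^ 2) * (θ - x) * u - u ^ 2 / 2))
    (f_b : ℝ → ℝ)
    (hfb : ∀ x : ℝ, f_b x = (μ * θ + σ ^ 2 / 2 - r) - μ * x - r * c_b * Real.exp (-x))
    (W Ψ : ℝ → ℝ)
    (hW : ∀ x, W x = deriv F x * G x - F x * deriv G x)
    (hWpos : ∀ x, 0 < W x)
    (hΨ : ∀ x, Ψ x = 2 * F x / (σ ^ 2 * W x))
    (xb1 xb2 : ℝ) (hlt : xb1 < xb2) (hroot1 : f_b xb1 = 0) (hroot2 : f_b xb2 = 0) :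
    (∃ a ∈ Ioo xb1 xb2, F a * Real.exp a = deriv F a * (Real.exp a + c_b)) ↔
      |∫ x in Iic xb1, Ψ x * Real.exp x * f_b x| <
        ∫ x in xb1..xb2, Ψ x * Real.exp x * f_b x := by
  have hσ2 : (0:ℝ) < σ ^ 2 := by positivity
  set k : ℝ := Real.sqrt (2 * μ / σ ^ 2) with hkdef
  have hkpos : 0 < k := Real.sqrt_pos.2 (by positivity)
  have hk2 : k ^ 2 = 2 * μ / σ ^ 2 := Real.sq_sqrt (by positivity)
  set p : ℝ := r / μ - 1 with hpdef
  have hp : -1 < p := by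
    have : 0 < r / μ := div_pos hr hμ
    simp only [hpdef]; linarith
  have hμp : μ * (p + 1) = r := by
    simp only [hpdef]; field_simp; ring
  have hFeq : F = fun x => Stmt16Aux.A k p (x - θ) := by
    funext x; rw [hF x]; rfl
  have hGeq : G = fun x => Stmt16Aux.A k p (θ - x) := by
    funext x; rw [hG x]; rfl
  -- first derivative of F
  set F1 : ℝ → ℝ := fun x => k * Stmt16Aux.A k (p+1) (x - θ) with hF1def
  have hFd : ∀ x, HasDerivAt F (F1 x) x := by
    intro x
    rw [hFeq]
    have h1 := Stmt16Aux.A_hasDerivAt hp hkpos.le (x - θ)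
    have h2 : HasDerivAt (fun y : ℝ => y - θ) 1 x := (hasDerivAt_id x).sub_const θ
    simpa [Function.comp_def] using h1.comp x h2
  set F2 : ℝ → ℝ := fun x => k ^ 2 * Stmt16Aux.A k (p+2) (x - θ) with hF2def
  have hF1d : ∀ x, HasDerivAt F1 (F2 x) x := by
    intro x
    have h1 := Stmt16Aux.A_hasDerivAt (by linarith : (-1:ℝ) < p+1) hkpos.le (x - θ)
    have h2 : HasDerivAt (fun y : ℝ => y - θ) 1 x := (hasDerivAt_id x).sub_const θ
    have h3 := (h1.comp x h2).const_mul k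
    have : p + 1 + 1 = p + 2 := by ring
    rw [this] at h3
    simpa [hF1def, hF2def, Function.comp, sq, mul_assoc] using h3
  -- derivatives of G
  set G1 : ℝ → ℝ := fun x => -(k * Stmt16Aux.A k (p+1) (θ - x)) with hG1def
  have hGd : ∀ x, HasDerivAt G (G1 x) x := by
    intro x
    rw [hGeq]
    have h1 := Stmt16Aux.A_hasDerivAt hp hkpos.le (θ - x)
    have h2 : HasDerivAt (fun y : ℝ => θ - y) (-1) x := by
      simpa using (hasDerivAt_id x).const_sub θ
    have := h1.comp x h2
    simpa [Function.comp_def] using this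
  set G2 : ℝ → ℝ := fun x => k ^ 2 * Stmt16Aux.A k (p+2) (θ - x) with hG2def
  have hG1d : ∀ x, HasDerivAt G1 (G2 x) x := by
    intro x
    have h1 := Stmt16Aux.A_hasDerivAt (by linarith : (-1:ℝ) < p+1) hkpos.le (θ - x)
    have h2 : HasDerivAt (fun y : ℝ => θ - y) (-1) x := by
      simpa using (hasDerivAt_id x).const_sub θ
    have h3 := ((h1.comp x h2).const_mul k).neg
    have : p + 1 + 1 = p + 2 := by ring
    rw [this] at h3
    simpa [hG1def, hG2def, Function.comp, sq, mul_assoc, Pi.neg_def] using h3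
  -- ODEs
  have hODE : ∀ x, σ ^ 2 / 2 * F2 x = r * F x + μ * (x - θ) * F1 x := by
    intro x
    have h := Stmt16Aux.A_ode hp k (x - θ)
    have hμk : σ ^ 2 / 2 * k ^ 2 = μ := by rw [hk2]; field_simp
    rw [hFeq]
    calc σ ^ 2 / 2 * (k ^ 2 * Stmt16Aux.A k (p+2) (x-θ))
        = (σ ^ 2 / 2 * k ^ 2) * ((p+1) * Stmt16Aux.A k p (x-θ)
          + (k*(x-θ)) * Stmt16Aux.A k (p+1) (x-θ)) := by rw [h]; ring
      _ = (μ * (p+1)) * Stmt16Aux.A k p (x-θ) + μ*(x-θ)*(k * Stmt16Aux.A k (p+1) (x-θ)) := by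
          rw [hμk]; ring
      _ = r * Stmt16Aux.A k p (x-θ) + μ*(x-θ)*(k * Stmt16Aux.A k (p+1) (x-θ)) := by rw [hμp]
  have hODEG : ∀ x, σ ^ 2 / 2 * G2 x = r * G x + μ * (x - θ) * G1 x := by
    intro x
    have h := Stmt16Aux.A_ode hp k (θ - x)
    have hμk : σ ^ 2 / 2 * k ^ 2 = μ := by rw [hk2]; field_simp
    rw [hGeq]
    calc σ ^ 2 / 2 * (k ^ 2 * Stmt16Aux.A k (p+2) (θ-x))
        = (σ ^ 2 / 2 * k ^ 2) * ((p+1) * Stmt16Aux.A k p (θ-x)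
          + (k*(θ-x)) * Stmt16Aux.A k (p+1) (θ-x)) := by rw [h]; ring
      _ = (μ * (p+1)) * Stmt16Aux.A k p (θ-x) + μ*(x-θ)*(-(k * Stmt16Aux.A k (p+1) (θ-x))) := by
          rw [hμk]; ring
      _ = r * Stmt16Aux.A k p (θ-x) + μ*(x-θ)*(-(k * Stmt16Aux.A k (p+1) (θ-x))) := by rw [hμp]
  -- Wronskian
  have hWf : ∀ x, W x = F1 x * G x - F x * G1 x := by
    intro x; rw [hW x, (hFd x).deriv, (hGd x).deriv]
  have hWd : ∀ x, HasDerivAt W (2*μ*(x-θ)/σ^2 * W x) x := by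
    intro x
    have hWfun : W = fun x => F1 x * G x - F x * G1 x := funext hWf
    have hd : HasDerivAt W (F2 x * G x + F1 x * G1 x - (F1 x * G1 x + F x * G2 x)) x := by
      rw [hWfun]
      exact ((hF1d x).mul (hGd x)).sub ((hFd x).mul (hG1d x))
    have heq : F2 x * G x + F1 x * G1 x - (F1 x * G1 x + F x * G2 x) = 2*μ*(x-θ)/σ^2 * W x := by
      have h1 := hODE x
      have h2 := hODEG x
      have h3 := hWf x
      have h5 : σ^2 * (2*μ*(x-θ)/σ^2 * W x) = 2*μ*(x-θ)*W x := by field_simp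
      have h4 : σ^2 * (F2 x * G x + F1 x * G1 x - (F1 x * G1 x + F x * G2 x))
          = σ^2 * (2*μ*(x-θ)/σ^2 * W x) := by
        rw [h5]
        linear_combination (2*G x) * h1 - (2*F x) * h2 - (2*μ*(x-θ)) * h3
      exact mul_left_cancel₀ hσ2.ne' h4
    rwa [heq] at hd
  -- W is bounded below by W θ
  have hVd : ∀ x, HasDerivAt (fun x => W x * Real.exp (-(μ/σ^2)*(x-θ)^2)) 0 x := by
    intro x
    have h2 : HasDerivAt (fun x : ℝ => -(μ/σ^2)*(x-θ)^2) (-(μ/σ^2)*(2*(x-θ))) x := by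
      have := (((hasDerivAt_id x).sub_const θ).pow 2).const_mul (-(μ/σ^2))
      simpa using this
    have h3 := h2.exp
    have h4 := (hWd x).mul h3
    refine h4.congr_deriv ?_
    ring
  have hconst : ∀ x, W x * Real.exp (-(μ/σ^2)*(x-θ)^2) = W θ := by
    intro x
    have hdiff : Differentiable ℝ (fun x => W x * Real.exp (-(μ/σ^2)*(x-θ)^2)) :=
      fun y => (hVd y).differentiableAt
    have := is_const_of_deriv_eq_zero hdiff (fun y => (hVd y).deriv) x θ
    simpa using this
  have hWlb : ∀ x, W θ ≤ W x := by
    intro x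
    have h1 := hconst x
    have h2 : Real.exp (-(μ/σ^2)*(x-θ)^2) ≤ 1 := by
      rw [Real.exp_le_one_iff]
      have : 0 ≤ (μ/σ^2)*(x-θ)^2 := by positivity
      linarith
    calc W θ = W x * Real.exp (-(μ/σ^2)*(x-θ)^2) := h1.symm
      _ ≤ W x * 1 := mul_le_mul_of_nonneg_left h2 (hWpos x).le
      _ = W x := mul_one _
  -- positivity of F and Ψ
  have hFpos : ∀ x, 0 < F x := by
    intro x; rw [hFeq]; exact Stmt16Aux.A_pos hp k (x - θ)
  have hΨpos : ∀ x, 0 < Ψ x := by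
    intro x; rw [hΨ x]
    exact div_pos (by linarith [hFpos x]) (mul_pos hσ2 (hWpos x))
  -- continuity
  have hFcont : Continuous F :=
    Differentiable.continuous (fun x => (hFd x).differentiableAt)
  have hWcont : Continuous W :=
    Differentiable.continuous (fun x => (hWd x).differentiableAt)
  have hfbcont : Continuous f_b := by
    have : f_b = fun x => (μ * θ + σ ^ 2 / 2 - r) - μ * x - r * c_b * Real.exp (-x) := funext hfb
    rw [this]
    exact (continuous_const.sub (continuous_const.mul continuous_id)).sub
      (continuous_const.mul (Real.continuous_exp.comp continuous_neg))
  have hΨcont : Continuous Ψ := by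
    have : Ψ = fun x => 2 * F x / (σ ^ 2 * W x) := funext hΨ
    rw [this]
    exact (continuous_const.mul hFcont).div (continuous_const.mul hWcont)
      (fun x => mul_ne_zero hσ2.ne' (hWpos x).ne')
  -- the key functions
  set g : ℝ → ℝ := fun x => Ψ x * Real.exp x * f_b x with hgdef
  set w : ℝ → ℝ := fun x => Real.exp x * F x - (Real.exp x + c_b) * F1 x with hwdef
  set φ : ℝ → ℝ := fun x => w x / W x with hφdef
  have hgcont : Continuous g := (hΨcont.mul Real.continuous_exp).mul hfbcont
  have hwd : ∀ x, HasDerivAt w (Real.exp x * F x - (Real.exp x + c_b) * F2 x) x := by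
    intro x
    have he : HasDerivAt Real.exp (Real.exp x) x := Real.hasDerivAt_exp x
    have h1 := he.mul (hFd x)
    have h2 := (he.add_const c_b).mul (hF1d x)
    have h3 := h1.sub h2
    refine h3.congr_deriv ?_
    ring
  have hφd : ∀ x, HasDerivAt φ (g x) x := by
    intro x
    have hdd := (hwd x).div (hWd x) (hWpos x).ne'
    refine hdd.congr_deriv ?_
    symm
    have hF2x : F2 x = 2/σ^2 * (r * F x + μ*(x-θ)*F1 x) := by
      have h1 := hODE x
      field_simp at h1 ⊢
      linarith
    have hfbx : Real.exp x * f_b x = Real.exp x * ((μ*θ + σ^2/2 - r) - μ*x) - r*c_b := by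
      rw [hfb x, Real.exp_neg]
      field_simp
    show Ψ x * Real.exp x * f_b x = _
    rw [hΨ x, mul_assoc, hfbx, hF2x, hwdef]
    simp only []
    field_simp [(hWpos x).ne']
    ring
  -- limits at -infinity
  have hFbot : Tendsto F atBot (𝓝 0) := by
    rw [hFeq]
    have h1 : Tendsto (fun x : ℝ => x - θ) atBot atBot := tendsto_atBot_add_const_right _ (-θ) tendsto_id
    exact (Stmt16Aux.A_tendsto_atBot hp hkpos).comp h1
  have hF1bot : Tendsto F1 atBot (𝓝 0) := by
    have h1 : Tendsto (fun x : ℝ => x - θ) atBot atBot := tendsto_atBot_add_const_right _ (-θ) tendsto_id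
    have h2 := ((Stmt16Aux.A_tendsto_atBot (by linarith : (-1:ℝ) < p+1) hkpos).comp h1).const_mul k
    simpa [hF1def, Function.comp] using h2
  have hwbot : Tendsto w atBot (𝓝 0) := by
    have h1 : Tendsto (fun x => Real.exp x * F x) atBot (𝓝 0) := by
      simpa using Real.tendsto_exp_atBot.mul hFbot
    have h2 : Tendsto (fun x => (Real.exp x + c_b) * F1 x) atBot (𝓝 0) := by
      have := (Real.tendsto_exp_atBot.add_const c_b).mul hF1bot
      simpa using this
    simpa using h1.sub h2
  have hφbot : Tendsto φ atBot (𝓝 0) := by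
    refine squeeze_zero_norm ?_ (a := fun x => ‖w x‖ / W θ) (by simpa using hwbot.norm.div_const (W θ))
    intro x
    rw [hφdef]
    simp only [norm_div, Real.norm_eq_abs]
    rw [abs_of_pos (hWpos x)]
    exact div_le_div_of_nonneg_left (abs_nonneg _) (hWpos θ) (hWlb x)
  -- sign of f_b via strict concavity
  have hconc : StrictConcaveOn ℝ univ f_b := by
    apply strictConcaveOn_of_deriv2_neg convex_univ hfbcont.continuousOn
    intro y _
    have hd1 : deriv f_b = fun z => -μ + r*c_b*Real.exp (-z) := by
      funext z
      have h1 : HasDerivAt (fun z:ℝ => Real.exp (-z)) (-Real.exp (-z)) z := by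
        simpa using ((hasDerivAt_id z).neg).exp
      have h2 : HasDerivAt f_b (-μ + r*c_b*Real.exp (-z)) z := by
        have hfe : f_b = fun z => (μ * θ + σ ^ 2 / 2 - r) - μ * z - r * c_b * Real.exp (-z) :=
          funext hfb
        rw [hfe]
        have := ((hasDerivAt_const z (μ * θ + σ ^ 2 / 2 - r)).sub
          ((hasDerivAt_id z).const_mul μ)).sub (h1.const_mul (r*c_b))
        refine this.congr_deriv ?_
        ring
      exact h2.deriv
    have hd2 : deriv (deriv f_b) y = -(r*c_b*Real.exp (-y)) := by
      rw [hd1]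
      have h1 : HasDerivAt (fun z:ℝ => Real.exp (-z)) (-Real.exp (-y)) y := by
        simpa using ((hasDerivAt_id y).neg).exp
      have h2 : HasDerivAt (fun z => -μ + r*c_b*Real.exp (-z)) (-(r*c_b*Real.exp (-y))) y := by
        have := (h1.const_mul (r*c_b)).const_add (-μ)
        refine this.congr_deriv ?_
        ring
      exact h2.deriv
    show deriv (deriv f_b) y < 0
    rw [hd2]
    have hpos : 0 < r * c_b * Real.exp (-y) := by positivity
    linarith
  have hfbneg : ∀ x, x < xb1 → f_b x < 0 := by
    intro x hx
    by_contra hcon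
    push_neg at hcon
    have hx2 : x < xb2 := lt_trans hx hlt
    set a : ℝ := (xb2 - xb1)/(xb2 - x) with hadef
    set b : ℝ := (xb1 - x)/(xb2 - x) with hbdef
    have ha : 0 < a := div_pos (by linarith) (by linarith)
    have hb : 0 < b := div_pos (by linarith) (by linarith)
    have hne : xb2 - x ≠ 0 := sub_ne_zero.2 hx2.ne'
    have hab : a + b = 1 := by
      rw [hadef, hbdef, ← add_div]
      field_simp
      ring
    have hcomb : a • x + b • xb2 = xb1 := by
      rw [smul_eq_mul, smul_eq_mul, hadef, hbdef]
      field_simp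
      ring
    have hlt2 := hconc.2 (mem_univ x) (mem_univ xb2) (ne_of_lt hx2) ha hb hab
    rw [hcomb, hroot1, hroot2, smul_eq_mul, smul_eq_mul] at hlt2
    nlinarith
  have hfbpos : ∀ x, xb1 < x → x < xb2 → 0 < f_b x := by
    intro x hx1 hx2
    set a : ℝ := (xb2 - x)/(xb2 - xb1) with hadef
    set b : ℝ := (x - xb1)/(xb2 - xb1) with hbdef
    have ha : 0 < a := div_pos (by linarith) (by linarith)
    have hb : 0 < b := div_pos (by linarith) (by linarith)
    have hne : xb2 - xb1 ≠ 0 := sub_ne_zero.2 hlt.ne'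
    have hab : a + b = 1 := by
      rw [hadef, hbdef, ← add_div]
      field_simp
      ring
    have hcomb : a • xb1 + b • xb2 = x := by
      rw [smul_eq_mul, smul_eq_mul, hadef, hbdef]
      field_simp
      ring
    have hlt2 := hconc.2 (mem_univ xb1) (mem_univ xb2) (ne_of_lt hlt) ha hb hab
    rw [hcomb, hroot1, hroot2, smul_eq_mul, smul_eq_mul] at hlt2
    nlinarith
  -- sign of g
  have hgneg : ∀ x, x < xb1 → g x < 0 :=
    fun x hx => mul_neg_of_pos_of_neg (mul_pos (hΨpos x) (Real.exp_pos x)) (hfbneg x hx)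
  have hgle : ∀ x, x ≤ xb1 → g x ≤ 0 := by
    intro x hx
    rcases eq_or_lt_of_le hx with h | h
    · subst h
      simp only [hgdef, hroot1, mul_zero, le_refl]
    · exact (hgneg x h).le
  have hgpos : ∀ x, xb1 < x → x < xb2 → 0 < g x :=
    fun x h1 h2 => mul_pos (mul_pos (hΨpos x) (Real.exp_pos x)) (hfbpos x h1 h2)
  have hφcont : Continuous φ := Differentiable.continuous (fun x => (hφd x).differentiableAt)
  -- φ is nonpositive left of xb1
  have hφanti : AntitoneOn φ (Iic xb1) := by
    apply antitoneOn_of_deriv_nonpos (convex_Iic xb1) hφcont.continuousOn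
      (fun x _ => (hφd x).differentiableAt.differentiableWithinAt)
    intro x hx
    rw [interior_Iic] at hx
    rw [(hφd x).deriv]
    exact hgle x hx.le
  have hφle : ∀ b, b ≤ xb1 → φ b ≤ 0 := by
    intro b hb
    refine ge_of_tendsto hφbot ?_
    filter_upwards [eventually_le_atBot b] with x hx
    exact hφanti (mem_Iic.2 (le_trans hx hb)) (mem_Iic.2 hb) hx
  -- fundamental theorem of calculus on intervals
  have hFTC : ∀ a b : ℝ, ∫ x in a..b, g x = φ b - φ a := fun a b =>
    intervalIntegral.integral_eq_sub_of_hasDerivAt (fun x _ => hφd x)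
      (hgcont.intervalIntegrable a b)
  -- integrability on Iic xb1
  have hnormbd : ∀ i, i ≤ xb1 → (∫ x in i..xb1, ‖g x‖) ≤ -φ xb1 := by
    intro i hi
    have heqon : EqOn (fun x => ‖g x‖) (fun x => -g x) (uIcc i xb1) := by
      intro x hx
      rw [uIcc_of_le hi] at hx
      simp only [Real.norm_eq_abs]
      exact abs_of_nonpos (hgle x hx.2)
    rw [intervalIntegral.integral_congr heqon, intervalIntegral.integral_neg, hFTC i xb1]
    have := hφle i hi
    linarith
  have hIicInt : IntegrableOn g (Iic xb1) := by
    apply integrableOn_Iic_of_intervalIntegral_norm_bounded (-φ xb1) xb1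
      (fun i : ℝ => hgcont.integrableOn_Ioc) tendsto_id (l := atBot)
    filter_upwards [eventually_le_atBot xb1] with i hi using hnormbd i hi
  have hIicval : ∫ x in Iic xb1, g x = φ xb1 := by
    have := integral_Iic_of_hasDerivAt_of_tendsto' (fun x _ => hφd x) hIicInt hφbot
    simpa using this
  -- φ xb1 < 0
  have hφ1neg : φ xb1 < 0 := by
    have hneg : 0 < ∫ x in Iic xb1, -g x := by
      refine (setIntegral_pos_iff_support_of_nonneg_ae ?_ hIicInt.neg).2 ?_
      · rw [EventuallyLE, ae_restrict_iff' measurableSet_Iic]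
        filter_upwards with x hx
        simpa using hgle x hx
      · have hsub : Iio xb1 ⊆ Function.support (fun x => -g x) ∩ Iic xb1 := by
          intro x hx
          have h1 : g x < 0 := hgneg x hx
          refine ⟨?_, mem_Iic.2 (le_of_lt hx)⟩
          simp only [Function.mem_support, neg_ne_zero]
          exact h1.ne
        refine lt_of_lt_of_le ?_ (measure_mono hsub)
        rw [Real.volume_Iio]
        exact ENNReal.zero_lt_top
    rw [integral_neg, hIicval] at hneg
    linarith
  -- φ strictly monotone on [xb1, xb2]
  have hsm : StrictMonoOn φ (Icc xb1 xb2) := by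
    apply strictMonoOn_of_deriv_pos (convex_Icc xb1 xb2) hφcont.continuousOn
    intro x hx
    rw [interior_Icc] at hx
    rw [(hφd x).deriv]
    exact hgpos x hx.1 hx.2
  have habs : |∫ x in Iic xb1, g x| = -φ xb1 := by
    rw [hIicval, abs_of_neg hφ1neg]
  have hiv : ∫ x in xb1..xb2, g x = φ xb2 - φ xb1 := hFTC xb1 xb2
  rw [habs, hiv]
  constructor
  · rintro ⟨a, ha, heq⟩
    have hda : deriv F a = F1 a := (hFd a).deriv
    rw [hda] at heq
    have hwa : w a = 0 := by
      rw [hwdef]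
      simp only []
      linear_combination heq
    have hφa : φ a = 0 := by
      rw [hφdef]
      simp only [hwa, zero_div]
    have h2 : φ a < φ xb2 := hsm ⟨ha.1.le, ha.2.le⟩ ⟨hlt.le, le_refl _⟩ ha.2
    rw [hφa] at h2
    linarith
  · intro h
    have hφ2 : 0 < φ xb2 := by linarith
    have h0 : (0:ℝ) ∈ Ioo (φ xb1) (φ xb2) := ⟨hφ1neg, hφ2⟩
    obtain ⟨a, ha, hfa⟩ := intermediate_value_Ioo hlt.le hφcont.continuousOn h0
    refine ⟨a, ha, ?_⟩
    have hwa : w a = 0 := by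
      have h1 : w a / W a = 0 := hfa
      exact (div_eq_zero_iff.1 h1).resolve_right (hWpos a).ne'
    rw [(hFd a).deriv]
    have h2 : Real.exp a * F a - (Real.exp a + c_b) * F1 a = 0 := hwa
    linear_combination h2
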